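/- The entropy of the orthonormal Chebyshev polynomials of the first kind satisfies E(T̂_n) = log 2 − 1 for all n ≥ 1 (and E(T̂_0) = 0), where T̂_n = √2 T_n for n ≥ 1, with T_n(cos θ) = cos(nθ), and E(T̂_n) = −∫_{−1}^1 (T̂_n(x))² log((T̂_n(x))²) (1/(π√(1−x²))) dx. -/

import Mathlib

open Polynomial

/-- Orthonormal Chebyshev polynomial of the first kind: `T̂_0 = 1`,
`T̂_n = √2 · T_n` for `n ≥ 1`. -/
noncomputable def chebyshevTHat (n : ℕ) (x : ℝ) : ℝ :=
  if n = 0 then 1 else Real.sqrt 2 * (Polynomial.Chebyshev.T ℝ n).eval x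

open Real MeasureTheory intervalIntegral Set

lemma intInt_log_sin_half : IntervalIntegrable (fun x => Real.log (Real.sin x)) volume 0 (π/2) := by
  have hg : IntervalIntegrable (fun x : ℝ => 2 * x ^ (-(1/2) : ℝ) + Real.log (π/2))
      volume 0 (π/2) :=
    ((intervalIntegrable_rpow' (by norm_num)).const_mul 2).add intervalIntegrable_const
  refine hg.mono_fun ((Real.measurable_log.comp Real.measurable_sin).aestronglyMeasurable) ?_
  filter_upwards [ae_restrict_mem measurableSet_uIoc] with x hx
  rw [uIoc_of_le (by positivity : (0:ℝ) ≤ π/2)] at hx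
  obtain ⟨hx0, hx1⟩ := hx
  have hsin_pos : 0 < Real.sin x := Real.sin_pos_of_pos_of_lt_pi hx0 (lt_of_le_of_lt hx1 (by linarith [pi_pos]))
  have hsin_le : Real.sin x ≤ 1 := Real.sin_le_one x
  have h1 : |Real.log (Real.sin x)| = -Real.log (Real.sin x) := by
    rw [abs_of_nonpos (Real.log_nonpos hsin_pos.le hsin_le)]
  have hlb : 2/π * x ≤ Real.sin x := Real.mul_le_sin hx0.le hx1
  have h2 : -Real.log (Real.sin x) ≤ -Real.log (2/π * x) := by
    have := Real.log_le_log (by positivity) hlb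
    linarith
  have h3 : -Real.log (2/π * x) = Real.log (π/2) - Real.log x := by
    rw [Real.log_mul (by positivity) (ne_of_gt hx0)]
    have : Real.log (π/2) = - Real.log (2/π) := by
      rw [← Real.log_inv]; norm_num
    rw [this]; ring
  have h4 : -Real.log x ≤ 2 * x ^ (-(1/2) : ℝ) := by
    have hs : (0:ℝ) < x ^ ((1/2) : ℝ) := Real.rpow_pos_of_pos hx0 _
    have := Real.one_sub_inv_le_log_of_pos hs
    have hlog : Real.log (x ^ ((1/2):ℝ)) = (1/2) * Real.log x := Real.log_rpow hx0 _
    have hinv : (x ^ ((1/2):ℝ))⁻¹ = x ^ (-(1/2):ℝ) := by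
      rw [← Real.rpow_neg hx0.le]
    rw [hlog, hinv] at this
    nlinarith [Real.rpow_pos_of_pos hx0 (-(1/2):ℝ)]
  have hpos : 0 ≤ 2 * x ^ (-(1/2) : ℝ) + Real.log (π/2) := by
    have : (0:ℝ) ≤ Real.log (π/2) := Real.log_nonneg (by linarith [pi_gt_three])
    positivity
  simp only [Real.norm_eq_abs]
  rw [abs_of_nonneg hpos, h1]
  linarith

lemma intInt_log_sin_upper : IntervalIntegrable (fun x => Real.log (Real.sin x)) volume (π/2) π := by
  have h2 := (intInt_log_sin_half.comp_sub_left π).symm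
  have he : (fun x => Real.log (Real.sin (π - x))) = fun x => Real.log (Real.sin x) := by
    funext x; rw [Real.sin_pi_sub]
  rw [he] at h2
  have : π - π/2 = π/2 := by ring
  rwa [this, sub_zero] at h2

lemma intInt_log_sin : IntervalIntegrable (fun x => Real.log (Real.sin x)) volume 0 π :=
  intInt_log_sin_half.trans intInt_log_sin_upper

lemma integral_log_sin_pi : ∫ x in (0:ℝ)..π, Real.log (Real.sin x) = -π * Real.log 2 := by
  have hsplit : ∫ x in (0:ℝ)..π, Real.log (Real.sin x)
      = (∫ x in (0:ℝ)..(π/2), Real.log (Real.sin x)) + ∫ x in (π/2:ℝ)..π, Real.log (Real.sin x) :=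
    (integral_add_adjacent_intervals intInt_log_sin_half intInt_log_sin_upper).symm
  have hrefl : ∫ x in (π/2:ℝ)..π, Real.log (Real.sin x) = ∫ x in (0:ℝ)..(π/2), Real.log (Real.sin x) := by
    have h := integral_comp_sub_left (a := (0:ℝ)) (b := π/2) (fun x => Real.log (Real.sin x)) π
    simp only [Real.sin_pi_sub] at h
    rw [sub_zero] at h
    have h2 : π - π/2 = π/2 := by ring
    rw [h2] at h
    exact h.symm
  have hL : (∫ x in (0:ℝ)..π, Real.log (Real.sin x)) = 2 * ∫ x in (0:ℝ)..(π/2), Real.log (Real.sin x) := by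
    rw [hsplit, hrefl]; ring
  have hcos : ∫ x in (0:ℝ)..(π/2), Real.log (Real.cos x) = ∫ x in (0:ℝ)..(π/2), Real.log (Real.sin x) := by
    have h := integral_comp_sub_left (a := (0:ℝ)) (b := π/2) (fun x => Real.log (Real.sin x)) (π/2)
    simp only [Real.sin_pi_div_two_sub] at h
    rw [sub_zero, sub_self] at h
    exact h
  have hcos_int : IntervalIntegrable (fun x => Real.log (Real.cos x)) volume 0 (π/2) := by
    have h2 := (intInt_log_sin_half.comp_sub_left (π/2)).symm
    have he : (fun x => Real.log (Real.sin (π/2 - x))) = fun x => Real.log (Real.cos x) := by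
      funext x; rw [Real.sin_pi_div_two_sub]
    rw [he, sub_self, sub_zero] at h2
    exact h2
  have hsum : (∫ x in (0:ℝ)..(π/2), Real.log (Real.sin x))
      + (∫ x in (0:ℝ)..(π/2), Real.log (Real.sin x))
      = ∫ x in (0:ℝ)..(π/2), Real.log (Real.sin x * Real.cos x) := by
    nth_rewrite 2 [← hcos]
    rw [← integral_add intInt_log_sin_half hcos_int]
    apply integral_congr
    intro x hx
    rw [uIcc_of_le (by positivity : (0:ℝ) ≤ π/2)] at hx
    rcases eq_or_lt_of_le hx.1 with h0 | h0
    · simp [← h0]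
    rcases eq_or_lt_of_le hx.2 with h1 | h1
    · simp [h1, Real.cos_pi_div_two]
    have hsin : 0 < Real.sin x := Real.sin_pos_of_pos_of_lt_pi h0 (by linarith [pi_pos])
    have hcos : 0 < Real.cos x := Real.cos_pos_of_mem_Ioo ⟨by linarith [pi_pos], h1⟩
    exact (Real.log_mul hsin.ne' hcos.ne').symm
  have hint2 : IntervalIntegrable (fun x => Real.log (Real.sin (2 * x))) volume 0 (π/2) := by
    have h := intInt_log_sin.comp_mul_left (c := 2)
    norm_num at h
    exact h
  have hdbl : (∫ x in (0:ℝ)..(π/2), Real.log (Real.sin x * Real.cos x))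
      = ∫ x in (0:ℝ)..(π/2), (Real.log (Real.sin (2 * x)) - Real.log 2) := by
    apply intervalIntegral.integral_congr_ae
    have hne : ∀ᵐ (x:ℝ), x ≠ π/2 := by
      rw [ae_iff]
      have : {x : ℝ | ¬ x ≠ π/2} = {π/2} := by ext y; simp
      rw [this]; exact measure_singleton _
    filter_upwards [hne] with x hx hmem
    rw [uIoc_of_le (by positivity : (0:ℝ) ≤ π/2)] at hmem
    have hx0 : 0 < x := hmem.1
    have hxlt : x < π/2 := lt_of_le_of_ne hmem.2 hx
    have hsin : 0 < Real.sin x := Real.sin_pos_of_pos_of_lt_pi hx0 (by linarith [pi_pos])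
    have hcosx : 0 < Real.cos x := Real.cos_pos_of_mem_Ioo ⟨by linarith [pi_pos], hxlt⟩
    have h2 : Real.sin (2 * x) = 2 * (Real.sin x * Real.cos x) := by
      rw [Real.sin_two_mul]; ring
    rw [h2, Real.log_mul two_ne_zero (ne_of_gt (mul_pos hsin hcosx))]
    ring
  have hval : (∫ x in (0:ℝ)..(π/2), (Real.log (Real.sin (2 * x)) - Real.log 2))
      = (1/2) * (∫ x in (0:ℝ)..π, Real.log (Real.sin x)) - (π/2) * Real.log 2 := by
    rw [integral_sub hint2 intervalIntegrable_const]
    have h := integral_comp_mul_left (a := (0:ℝ)) (b := π/2) (fun x => Real.log (Real.sin x))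
      (c := 2) (by norm_num)
    norm_num at h
    rw [h]
    simp [intervalIntegral.integral_const]
    ring
  have hkey := hsum.trans (hdbl.trans hval)
  rw [hL] at hkey ⊢
  linarith

lemma intInt_cos_two_mul_log_sin :
    IntervalIntegrable (fun x => Real.cos (2*x) * Real.log (Real.sin x)) volume 0 π := by
  apply intInt_log_sin.mono_fun
  · exact ((Real.measurable_cos.comp (measurable_id.const_mul 2)).mul
      (Real.measurable_log.comp Real.measurable_sin)).aestronglyMeasurable
  · filter_upwards with x
    simp only [Real.norm_eq_abs, abs_mul]
    calc |Real.cos (2*x)| * |Real.log (Real.sin x)| ≤ 1 * |Real.log (Real.sin x)| := by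
          apply mul_le_mul_of_nonneg_right (Real.abs_cos_le_one _) (abs_nonneg _)
    _ = |Real.log (Real.sin x)| := one_mul _

lemma integral_cos_two_mul_log_sin :
    ∫ x in (0:ℝ)..π, Real.cos (2*x) * Real.log (Real.sin x) = -(π/2) := by
  have hF : ∀ x ∈ Ioo (0:ℝ) π, HasDerivAt
      (fun θ => Real.cos θ * (Real.sin θ * Real.log (Real.sin θ)) - θ/2
        - Real.sin θ * Real.cos θ / 2)
      (Real.cos (2*x) * Real.log (Real.sin x)) x := by
    intro x hx
    have hsin : 0 < Real.sin x := Real.sin_pos_of_pos_of_lt_pi hx.1 hx.2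
    have h1 : HasDerivAt Real.sin (Real.cos x) x := Real.hasDerivAt_sin x
    have h2 : HasDerivAt Real.cos (-Real.sin x) x := Real.hasDerivAt_cos x
    have h3 : HasDerivAt (fun θ => Real.log (Real.sin θ)) (Real.cos x / Real.sin x) x :=
      (Real.hasDerivAt_sin x).log hsin.ne'
    have h4 : HasDerivAt (fun θ => Real.sin θ * Real.log (Real.sin θ))
        (Real.cos x * Real.log (Real.sin x) + Real.sin x * (Real.cos x / Real.sin x)) x :=
      h1.mul h3
    have h5 := (h2.mul h4).sub ((hasDerivAt_id x).div_const 2)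
    have h6 := h5.sub ((h1.mul h2).div_const 2)
    refine h6.congr_deriv ?_
    symm
    have hpy : Real.sin x ^ 2 + Real.cos x ^ 2 = 1 := Real.sin_sq_add_cos_sq x
    have hdiv : Real.sin x * (Real.cos x / Real.sin x) = Real.cos x := by
      field_simp
    rw [hdiv, Real.cos_two_mul]
    linear_combination (Real.log (Real.sin x) - 1/2) * hpy
  have hcont : ContinuousOn (fun θ => Real.cos θ * (Real.sin θ * Real.log (Real.sin θ)) - θ/2
      - Real.sin θ * Real.cos θ / 2) (Icc (0:ℝ) π) := by
    apply Continuous.continuousOn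
    exact ((Real.continuous_cos.mul (Real.continuous_mul_log.comp Real.continuous_sin)).sub
      (continuous_id.div_const 2)).sub ((Real.continuous_sin.mul Real.continuous_cos).div_const 2)
  have := integral_eq_sub_of_hasDeriv_right_of_le (le_of_lt pi_pos) hcont
    (fun x hx => (hF x hx).hasDerivWithinAt) intInt_cos_two_mul_log_sin
  rw [this]
  simp [Real.sin_pi, Real.cos_pi, Real.log_one]

lemma integral_cos_two_mul : ∫ θ in (0:ℝ)..π, Real.cos (2*θ) = 0 := by
  have h := integral_comp_mul_left (a := (0:ℝ)) (b := π) (fun u => Real.cos u)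
    (c := 2) two_ne_zero
  simp only [mul_zero] at h
  rw [h, integral_cos]
  simp [Real.sin_two_pi]

lemma integral_two_sin_sq_log :
    ∫ θ in (0:ℝ)..π, 2 * Real.sin θ ^ 2 * Real.log (2 * Real.sin θ ^ 2)
      = π - π * Real.log 2 := by
  have heq : ∀ θ ∈ uIcc (0:ℝ) π,
      2 * Real.sin θ ^ 2 * Real.log (2 * Real.sin θ ^ 2)
        = Real.log 2 * (1 - Real.cos (2*θ)) + 2 * Real.log (Real.sin θ)
          - 2 * (Real.cos (2*θ) * Real.log (Real.sin θ)) := by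
    intro θ hθ
    have hc2 : Real.cos (2*θ) = 1 - 2 * Real.sin θ ^ 2 := by
      rw [Real.cos_two_mul]
      have := Real.sin_sq_add_cos_sq θ
      linarith
    rcases eq_or_ne (Real.sin θ) 0 with hs | hs
    · simp [hs, hc2]
    · have hlog : Real.log (2 * Real.sin θ ^ 2) = Real.log 2 + 2 * Real.log (Real.sin θ) := by
        rw [Real.log_mul two_ne_zero (pow_ne_zero 2 hs), Real.log_pow]
        push_cast; ring
      rw [hlog, hc2]; ring
  rw [integral_congr heq]
  have h1 : IntervalIntegrable (fun θ => Real.log 2 * (1 - Real.cos (2*θ))) volume 0 π :=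
    (Continuous.intervalIntegrable (by continuity) 0 π)
  have h2 : IntervalIntegrable (fun θ => 2 * Real.log (Real.sin θ)) volume 0 π :=
    intInt_log_sin.const_mul 2
  have h3 : IntervalIntegrable (fun θ => 2 * (Real.cos (2*θ) * Real.log (Real.sin θ))) volume 0 π :=
    intInt_cos_two_mul_log_sin.const_mul 2
  rw [integral_sub (h1.add h2) h3, integral_add h1 h2, intervalIntegral.integral_const_mul, intervalIntegral.integral_const_mul,
    intervalIntegral.integral_const_mul, integral_sub intervalIntegrable_const
      (Continuous.intervalIntegrable (by continuity) 0 π),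
    integral_cos_two_mul, integral_log_sin_pi, integral_cos_two_mul_log_sin]
  simp
  ring
lemma integral_two_cos_sq_log (n : ℕ) (hn : n ≠ 0) :
    ∫ θ in (0:ℝ)..π, 2 * Real.cos ((n:ℝ)*θ) ^ 2 * Real.log (2 * Real.cos ((n:ℝ)*θ) ^ 2)
      = π - π * Real.log 2 := by
  set k : ℝ → ℝ := fun u => 2 * Real.sin u ^ 2 * Real.log (2 * Real.sin u ^ 2) with hk
  set h : ℝ → ℝ := fun u => 2 * Real.cos u ^ 2 * Real.log (2 * Real.cos u ^ 2) with hh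
  have hkcont : Continuous k := by
    have : k = (fun t => t * Real.log t) ∘ (fun u => 2 * Real.sin u ^ 2) := by
      funext u; rfl
    rw [this]
    exact Real.continuous_mul_log.comp (by continuity)
  have hhcont : Continuous h := by
    have : h = (fun t => t * Real.log t) ∘ (fun u => 2 * Real.cos u ^ 2) := by
      funext u; rfl
    rw [this]
    exact Real.continuous_mul_log.comp (by continuity)
  have hkper : Function.Periodic k π := by
    intro u; simp only [hk]
    rw [Real.sin_add_pi]
    ring_nf
  have hhper : Function.Periodic h π := by
    intro u; simp only [hh]
    rw [Real.cos_add_pi]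
    ring_nf
  have hhk : ∫ θ in (0:ℝ)..π, h θ = ∫ θ in (0:ℝ)..π, k θ := by
    have hcomp : ∀ θ : ℝ, h θ = k (θ + π/2) := by
      intro θ
      simp only [hk, hh]
      rw [Real.sin_add_pi_div_two]
    calc ∫ θ in (0:ℝ)..π, h θ = ∫ θ in (0:ℝ)..π, k (θ + π/2) := by
          exact integral_congr fun θ _ => hcomp θ
      _ = ∫ θ in (0 + π/2 : ℝ)..(π + π/2), k θ := integral_comp_add_right k (π/2)
      _ = ∫ θ in (π/2 : ℝ)..(π/2 + π), k θ := by norm_num; ring_nf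
      _ = ∫ θ in (0:ℝ)..(0 + π), k θ := hkper.intervalIntegral_add_eq (π/2) 0
      _ = ∫ θ in (0:ℝ)..π, k θ := by norm_num
  have hnR : (n:ℝ) ≠ 0 := Nat.cast_ne_zero.mpr hn
  have hscale : ∫ θ in (0:ℝ)..π, h ((n:ℝ)*θ) = (n:ℝ)⁻¹ * ∫ u in (0:ℝ)..((n:ℝ)*π), h u := by
    have := integral_comp_mul_left (a := (0:ℝ)) (b := π) h (c := (n:ℝ)) hnR
    simpa [mul_zero, smul_eq_mul] using this
  have hmult : ∫ u in (0:ℝ)..((n:ℝ)*π), h u = (n:ℝ) * ∫ u in (0:ℝ)..π, h u := by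
    have h_int : ∀ t₁ t₂ : ℝ, IntervalIntegrable h MeasureSpace.volume t₁ t₂ :=
      fun t₁ t₂ => hhcont.intervalIntegrable t₁ t₂
    have := hhper.intervalIntegral_add_zsmul_eq (n : ℤ) 0 h_int
    simp only [zero_add, zsmul_eq_mul, Int.cast_natCast] at this
    simpa using this
  have : ∫ θ in (0:ℝ)..π, h ((n:ℝ)*θ) = ∫ u in (0:ℝ)..π, h u := by
    rw [hscale, hmult, ← mul_assoc, inv_mul_cancel₀ hnR, one_mul]
  calc ∫ θ in (0:ℝ)..π, 2 * Real.cos ((n:ℝ)*θ) ^ 2 * Real.log (2 * Real.cos ((n:ℝ)*θ) ^ 2)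
      = ∫ θ in (0:ℝ)..π, h ((n:ℝ)*θ) := rfl
    _ = ∫ u in (0:ℝ)..π, h u := this
    _ = π - π * Real.log 2 := by rw [hhk]; exact integral_two_sin_sq_log

lemma sub_main (n : ℕ) (hn : n ≠ 0) :
    ∫ x in (-1:ℝ)..1,
        2 * ((Polynomial.Chebyshev.T ℝ n).eval x)^2
          * Real.log (2 * ((Polynomial.Chebyshev.T ℝ n).eval x)^2)
          * (1 / (π * Real.sqrt (1 - x^2)))
      = (1/π) * ∫ θ in (0:ℝ)..π,
          2 * Real.cos ((n:ℝ)*θ)^2 * Real.log (2 * Real.cos ((n:ℝ)*θ)^2) := by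
  set P : ℝ → ℝ := fun x =>
    2 * ((Polynomial.Chebyshev.T ℝ n).eval x)^2
      * Real.log (2 * ((Polynomial.Chebyshev.T ℝ n).eval x)^2) with hP
  set G : ℝ → ℝ := fun x => P x * (1 / (π * Real.sqrt (1 - x^2))) with hG
  have hPcont : Continuous P := by
    have : P = (fun t => t * Real.log t)
        ∘ (fun x => 2 * ((Polynomial.Chebyshev.T ℝ n).eval x)^2) := by
      funext x; rfl
    rw [this]
    exact Real.continuous_mul_log.comp
      (continuous_const.mul ((Polynomial.Chebyshev.T ℝ n).continuous.pow 2))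
  have hPcos : ∀ θ : ℝ, P (Real.cos θ)
      = 2 * Real.cos ((n:ℝ)*θ)^2 * Real.log (2 * Real.cos ((n:ℝ)*θ)^2) := by
    intro θ
    have h := Polynomial.Chebyshev.T_real_cos θ (n : ℤ)
    have h2 : ((n : ℤ) : ℝ) = (n : ℝ) := by push_cast; rfl
    rw [h2] at h
    simp only [hP, h]
  -- image facts
  have himg : Real.cos '' Ioo 0 π = Ioo (-1 : ℝ) 1 := by
    apply Subset.antisymm
    · rintro y ⟨θ, hθ, rfl⟩
      constructor
      · have := Real.cos_lt_cos_of_nonneg_of_le_pi hθ.1.le le_rfl hθ.2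
        rwa [Real.cos_pi] at this
      · have := Real.cos_lt_cos_of_nonneg_of_le_pi le_rfl hθ.2.le hθ.1
        rwa [Real.cos_zero] at this
    · rintro y ⟨hy1, hy2⟩
      refine ⟨Real.arccos y, ⟨Real.arccos_pos.mpr hy2, ?_⟩, Real.cos_arccos hy1.le hy2.le⟩
      rcases lt_or_eq_of_le (Real.arccos_le_pi y) with h | h
      · exact h
      · exfalso
        have := Real.cos_arccos hy1.le hy2.le
        rw [h, Real.cos_pi] at this
        exact absurd this.symm (ne_of_gt hy1)
  have hsqrt : ∀ θ ∈ Ioo (0:ℝ) π, Real.sqrt (1 - Real.cos θ ^ 2) = Real.sin θ := by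
    intro θ hθ
    rw [← Real.sin_sq, Real.sqrt_sq_eq_abs,
      abs_of_pos (Real.sin_pos_of_pos_of_lt_pi hθ.1 hθ.2)]
  have hinj : InjOn Real.cos (Ioo 0 π) := Real.injOn_cos.mono Ioo_subset_Icc_self
  have hderivWithin : ∀ x ∈ Ioo (0:ℝ) π,
      HasDerivWithinAt Real.cos (-Real.sin x) (Ioo 0 π) x :=
    fun x _ => (Real.hasDerivAt_cos x).hasDerivWithinAt
  -- integrability of G on Ioo (-1) 1
  have hGIoo : IntegrableOn G (Ioo (-1:ℝ) 1) := by
    rw [← himg,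
      integrableOn_image_iff_integrableOn_abs_deriv_smul measurableSet_Ioo hderivWithin hinj]
    have hcont : Continuous (fun θ : ℝ => (1/π) * P (Real.cos θ)) := by
      exact continuous_const.mul (hPcont.comp Real.continuous_cos)
    apply ((hcont.integrableOn_Icc (a := 0) (b := π)).mono_set Ioo_subset_Icc_self).congr_fun
      ?_ measurableSet_Ioo
    intro θ hθ
    have hsin : 0 < Real.sin θ := Real.sin_pos_of_pos_of_lt_pi hθ.1 hθ.2
    simp only [hG, smul_eq_mul, abs_neg, abs_of_pos hsin, hsqrt θ hθ]
    field_simp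
  have hG1 : IntegrableOn G (Real.cos '' (uIcc 0 π)) := by
    rw [uIcc_of_le Real.pi_pos.le, Real.bijOn_cos.image_eq]
    exact (integrableOn_Icc_iff_integrableOn_Ioo).mpr hGIoo
  have hg2 : IntegrableOn (fun θ => (-Real.sin θ) • G (Real.cos θ)) (uIcc 0 π) := by
    rw [uIcc_of_le Real.pi_pos.le]
    rw [integrableOn_Icc_iff_integrableOn_Ioo]
    have hcont : Continuous (fun θ : ℝ => -((1/π) * P (Real.cos θ))) := by
      exact (continuous_const.mul (hPcont.comp Real.continuous_cos)).neg
    apply ((hcont.integrableOn_Icc (a := 0) (b := π)).mono_set Ioo_subset_Icc_self).congr_fun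
      ?_ measurableSet_Ioo
    intro θ hθ
    have hsin : 0 < Real.sin θ := Real.sin_pos_of_pos_of_lt_pi hθ.1 hθ.2
    simp only [hG, smul_eq_mul, hsqrt θ hθ]
    field_simp
  have hgcont : ContinuousOn G (Real.cos '' Ioo 0 π) := by
    rw [himg]
    apply (hPcont.continuousOn).mul
    apply ContinuousOn.div continuousOn_const
      (Continuous.continuousOn (by continuity))
    intro x hx
    have hx2 : x^2 < 1 := by nlinarith [hx.1, hx.2]
    have : 0 < Real.sqrt (1 - x^2) := Real.sqrt_pos.mpr (by linarith)
    positivity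
  have hmin : min (0:ℝ) π = 0 := min_eq_left Real.pi_pos.le
  have hmax : max (0:ℝ) π = π := max_eq_right Real.pi_pos.le
  have hmain := integral_comp_smul_deriv''' (a := (0:ℝ)) (b := π)
    (f := Real.cos) (f' := fun θ => -Real.sin θ) (g := G)
    (Real.continuous_cos.continuousOn)
    (by rw [hmin, hmax]; exact fun x _ => (Real.hasDerivAt_cos x).hasDerivWithinAt)
    (by rw [hmin, hmax]; exact hgcont) hG1 hg2
  -- evaluate both sides
  rw [Real.cos_zero, Real.cos_pi] at hmain
  have hLHS : (∫ θ in (0:ℝ)..π, (-Real.sin θ) • G (Real.cos θ))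
      = ∫ θ in (0:ℝ)..π, -((1/π) * P (Real.cos θ)) := by
    apply intervalIntegral.integral_congr_ae
    have hne : ∀ᵐ (θ:ℝ), θ ≠ π := by
      rw [ae_iff]
      have : {θ : ℝ | ¬ θ ≠ π} = {π} := by ext y; simp
      rw [this]; exact measure_singleton _
    filter_upwards [hne] with θ hθne hθ
    rw [uIoc_of_le Real.pi_pos.le] at hθ
    have hθIoo : θ ∈ Ioo (0:ℝ) π := ⟨hθ.1, lt_of_le_of_ne hθ.2 hθne⟩
    have hsin : 0 < Real.sin θ := Real.sin_pos_of_pos_of_lt_pi hθIoo.1 hθIoo.2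
    simp only [hG, smul_eq_mul, hsqrt θ hθIoo]
    field_simp
  have hcontPcos : Continuous fun θ : ℝ => P (Real.cos θ) :=
    hPcont.comp Real.continuous_cos
  have hPInt : IntervalIntegrable (fun θ : ℝ => P (Real.cos θ)) volume 0 π :=
    hcontPcos.intervalIntegrable 0 π
  simp only [Function.comp_apply] at hmain
  rw [hLHS] at hmain
  rw [intervalIntegral.integral_symm (-1) 1] at hmain
  have hneg : (∫ θ in (0:ℝ)..π, -((1/π) * P (Real.cos θ)))
      = -((1/π) * ∫ θ in (0:ℝ)..π, P (Real.cos θ)) := by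
    rw [intervalIntegral.integral_neg, intervalIntegral.integral_const_mul]
  rw [hneg] at hmain
  have h2 := neg_injective hmain
  rw [← h2]
  congr 1
  apply intervalIntegral.integral_congr
  intro θ _
  exact hPcos θ

theorem entropy_orthonormal_chebyshevT (n : ℕ) :
    -∫ x in (-1 : ℝ)..1,
        (chebyshevTHat n x) ^ 2 * Real.log ((chebyshevTHat n x) ^ 2) *
          (1 / (Real.pi * Real.sqrt (1 - x ^ 2))) =
      if n = 0 then 0 else Real.log 2 - 1 := by
  rcases eq_or_ne n 0 with rfl | hn
  · simp [chebyshevTHat]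
  · rw [if_neg hn]
    have hsimp : ∀ x : ℝ, (chebyshevTHat n x) ^ 2
        = 2 * ((Polynomial.Chebyshev.T ℝ n).eval x) ^ 2 := by
      intro x
      simp only [chebyshevTHat, if_neg hn, mul_pow,
        Real.sq_sqrt (by norm_num : (0:ℝ) ≤ 2)]
    simp only [hsimp]
    rw [sub_main n hn, integral_two_cos_sq_log n hn]
    have hπ : (π:ℝ) ≠ 0 := Real.pi_ne_zero
    field_simp
    ring
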